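/- Let S be a nonempty finite set, H : S × S → ℂ Hermitian, and ψ : S × ℝ → ℂ such that for every σ the map θ ↦ ψ(σ,θ) is differentiable and ψ(σ,θ) ≠ 0. Write E_loc(σ,θ) = Σ_{σ'} H(σ,σ') ψ(σ',θ)/ψ(σ,θ), p(σ,θ) = |ψ(σ,θ)|², E(θ) = (Σ_{σ,σ'} conj(ψ(σ,θ)) H(σ,σ') ψ(σ',θ)) / (Σ_σ p(σ,θ)), and for f : S → ℂ let ⟨f⟩ = Σ_σ p(σ,θ) f(σ) / Σ_σ p(σ,θ). Then d E(θ)/dθ = 2 Re[ ⟨ (∂_θ conj(ψ)/conj(ψ)) · E_loc ⟩ − ⟨E_loc⟩ · ⟨ ∂_θ conj(ψ)/conj(ψ) ⟩ ]. -/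

import Mathlib

/-- The VMC energy gradient formula (equation (6)/(A7) of the paper): for a
Hermitian `H` and a differentiable nowhere-vanishing family of wave functions
`ψ(·,θ)` on a finite configuration set, the θ-derivative of the energy
expectation `E(θ) = (∑_{σ,σ'} ψ*(σ) H(σ,σ') ψ(σ')) / (∑_σ |ψ(σ)|²)` equals
`2 Re[⟨(∂_θ ψ*/ψ*) E_loc⟩ − ⟨E_loc⟩⟨∂_θ ψ*/ψ*⟩]`, where
`E_loc(σ) = ∑ σ', H σ σ' ψ σ' / ψ σ` and `⟨·⟩` is the `|ψ|²`-weighted average. -/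
theorem stmt_13 (S : Type*) [Fintype S] [Nonempty S]
    (H : S → S → ℂ) (hH : ∀ σ σ', H σ σ' = starRingEnd ℂ (H σ' σ))
    (ψ : S → ℝ → ℂ) (hψd : ∀ σ, Differentiable ℝ (ψ σ)) (hψ : ∀ σ θ, ψ σ θ ≠ 0)
    (θ : ℝ) :
    HasDerivAt
      (fun t => (∑ σ, ∑ σ', starRingEnd ℂ (ψ σ t) * H σ σ' * ψ σ' t)
          / (∑ σ, starRingEnd ℂ (ψ σ t) * ψ σ t))
      ((((2 : ℝ) * (((∑ σ, starRingEnd ℂ (ψ σ θ) * ψ σ θ *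
              ((deriv (fun t => starRingEnd ℂ (ψ σ t)) θ / starRingEnd ℂ (ψ σ θ)) *
                (∑ σ', H σ σ' * ψ σ' θ / ψ σ θ)))
            / (∑ σ, starRingEnd ℂ (ψ σ θ) * ψ σ θ))
          - ((∑ σ, starRingEnd ℂ (ψ σ θ) * ψ σ θ * (∑ σ', H σ σ' * ψ σ' θ / ψ σ θ))
              / (∑ σ, starRingEnd ℂ (ψ σ θ) * ψ σ θ))
            * ((∑ σ, starRingEnd ℂ (ψ σ θ) * ψ σ θ *
                  (deriv (fun t => starRingEnd ℂ (ψ σ t)) θ / starRingEnd ℂ (ψ σ θ)))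
              / (∑ σ, starRingEnd ℂ (ψ σ θ) * ψ σ θ))).re : ℝ)) : ℂ) θ := by
  classical
  set a : S → ℂ := fun σ => ψ σ θ with ha
  set b : S → ℂ := fun σ => deriv (ψ σ) θ with hbdef
  have hb : ∀ σ, HasDerivAt (ψ σ) (b σ) θ := fun σ => (hψd σ θ).hasDerivAt
  have hconjd : ∀ σ, HasDerivAt (fun t => starRingEnd ℂ (ψ σ t)) (starRingEnd ℂ (b σ)) θ :=
    fun σ => (hb σ).star
  have hderivconj : ∀ σ, deriv (fun t => starRingEnd ℂ (ψ σ t)) θ = starRingEnd ℂ (b σ) :=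
    fun σ => (hconjd σ).deriv
  have hane : ∀ σ, a σ ≠ 0 := fun σ => hψ σ θ
  have hcane : ∀ σ, starRingEnd ℂ (a σ) ≠ 0 := fun σ => by
    simpa using hane σ
  -- abbreviations
  set N : ℂ := ∑ σ, ∑ σ', starRingEnd ℂ (a σ) * H σ σ' * a σ' with hNdef
  set D : ℂ := ∑ σ, starRingEnd ℂ (a σ) * a σ with hDdef
  set A : ℂ := ∑ σ, starRingEnd ℂ (b σ) * a σ with hAdef
  set B : ℂ := ∑ σ, ∑ σ', starRingEnd ℂ (b σ) * H σ σ' * a σ' with hBdef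
  -- D nonzero
  have hDre : D.re = ∑ σ, Complex.normSq (a σ) := by
    rw [hDdef, Complex.re_sum]
    refine Finset.sum_congr rfl fun σ _ => ?_
    simp [Complex.normSq_apply, Complex.mul_re]
  have hDne : D ≠ 0 := by
    intro h
    have h2 : (0:ℝ) < ∑ σ, Complex.normSq (a σ) :=
      Finset.sum_pos (fun σ _ => Complex.normSq_pos.2 (hane σ)) Finset.univ_nonempty
    rw [← hDre, h] at h2
    simp at h2
  -- derivative of numerator
  have hN : HasDerivAt (fun t => ∑ σ, ∑ σ', starRingEnd ℂ (ψ σ t) * H σ σ' * ψ σ' t)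
      (∑ σ, ∑ σ', (starRingEnd ℂ (b σ) * H σ σ' * a σ' + starRingEnd ℂ (a σ) * H σ σ' * b σ')) θ := by
    refine HasDerivAt.fun_sum fun σ _ => HasDerivAt.fun_sum fun σ' _ => ?_
    have := ((hconjd σ).mul_const (H σ σ')).fun_mul (hb σ')
    simpa [ha, mul_comm, mul_left_comm, mul_assoc] using this
  have hD : HasDerivAt (fun t => ∑ σ, starRingEnd ℂ (ψ σ t) * ψ σ t)
      (∑ σ, (starRingEnd ℂ (b σ) * a σ + starRingEnd ℂ (a σ) * b σ)) θ := by
    refine HasDerivAt.fun_sum fun σ _ => ?_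
    simpa [ha] using (hconjd σ).fun_mul (hb σ)
  have key := hN.div hD hDne
  -- conjugation identities
  have hNconj : starRingEnd ℂ N = N := by
    rw [hNdef, map_sum]
    rw [Finset.sum_comm]
    refine Finset.sum_congr rfl fun σ _ => ?_
    rw [map_sum]
    refine Finset.sum_congr rfl fun σ' _ => ?_
    simp only [map_mul, Complex.conj_conj]
    rw [hH σ' σ]
    ring
  have hDconj : starRingEnd ℂ D = D := by
    rw [hDdef, map_sum]
    refine Finset.sum_congr rfl fun σ _ => ?_
    simp only [map_mul, Complex.conj_conj]
    ring
  have hBconj : starRingEnd ℂ B = ∑ σ, ∑ σ', starRingEnd ℂ (a σ) * H σ σ' * b σ' := by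
    rw [hBdef, map_sum, Finset.sum_comm]
    refine Finset.sum_congr rfl fun σ _ => ?_
    rw [map_sum]
    refine Finset.sum_congr rfl fun σ' _ => ?_
    simp only [map_mul, Complex.conj_conj]
    rw [hH σ' σ]
    ring
  have hAconj : starRingEnd ℂ A = ∑ σ, starRingEnd ℂ (a σ) * b σ := by
    rw [hAdef, map_sum]
    refine Finset.sum_congr rfl fun σ _ => ?_
    simp only [map_mul, Complex.conj_conj]
    ring
  -- rewrite statement sums into clean forms
  have e1 : (∑ σ, starRingEnd ℂ (ψ σ θ) * ψ σ θ *
        ((deriv (fun t => starRingEnd ℂ (ψ σ t)) θ / starRingEnd ℂ (ψ σ θ)) *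
          (∑ σ', H σ σ' * ψ σ' θ / ψ σ θ))) = B := by
    rw [hBdef]
    refine Finset.sum_congr rfl fun σ _ => ?_
    rw [hderivconj σ, ← Finset.sum_div]
    have hs : (∑ σ', starRingEnd ℂ (b σ) * H σ σ' * a σ')
        = starRingEnd ℂ (b σ) * ∑ σ', H σ σ' * a σ' := by
      rw [Finset.mul_sum]; exact Finset.sum_congr rfl fun _ _ => by ring
    rw [hs]
    show starRingEnd ℂ (a σ) * a σ * _ = _
    field_simp [hane σ, hcane σ]
    rw [div_eq_iff (mul_ne_zero (hcane σ) (hane σ))]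
    simp only [ha]
    ring
  have e2 : (∑ σ, starRingEnd ℂ (ψ σ θ) * ψ σ θ * (∑ σ', H σ σ' * ψ σ' θ / ψ σ θ)) = N := by
    rw [hNdef]
    refine Finset.sum_congr rfl fun σ _ => ?_
    rw [← Finset.sum_div]
    have hs : (∑ σ', starRingEnd ℂ (a σ) * H σ σ' * a σ')
        = starRingEnd ℂ (a σ) * ∑ σ', H σ σ' * a σ' := by
      rw [Finset.mul_sum]; exact Finset.sum_congr rfl fun _ _ => by ring
    rw [hs]
    show starRingEnd ℂ (a σ) * a σ * _ = _
    field_simp [hane σ, hcane σ]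
    simp only [ha]
    field_simp [hψ σ θ]
  have e3 : (∑ σ, starRingEnd ℂ (ψ σ θ) * ψ σ θ *
      (deriv (fun t => starRingEnd ℂ (ψ σ t)) θ / starRingEnd ℂ (ψ σ θ))) = A := by
    rw [hAdef]
    refine Finset.sum_congr rfl fun σ _ => ?_
    rw [hderivconj σ]
    show starRingEnd ℂ (a σ) * a σ * _ = _
    field_simp [hane σ, hcane σ]
    simp only [ha]
    field_simp [hψ σ θ]
  have hDenom : (∑ σ, starRingEnd ℂ (ψ σ θ) * ψ σ θ) = D := rfl
  have hNeq : (∑ σ, ∑ σ', starRingEnd ℂ (ψ σ θ) * H σ σ' * ψ σ' θ) = N := rfl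
  have hsplitN : (∑ σ, ∑ σ', (starRingEnd ℂ (b σ) * H σ σ' * a σ' + starRingEnd ℂ (a σ) * H σ σ' * b σ'))
      = B + starRingEnd ℂ B := by
    rw [hBconj, hBdef, ← Finset.sum_add_distrib]
    exact Finset.sum_congr rfl fun σ _ => by rw [← Finset.sum_add_distrib]
  have hsplitD : (∑ σ, (starRingEnd ℂ (b σ) * a σ + starRingEnd ℂ (a σ) * b σ))
      = A + starRingEnd ℂ A := by
    rw [hAconj, hAdef, ← Finset.sum_add_distrib]
  rw [hsplitN, hsplitD, hDenom, hNeq] at key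
  refine key.congr_deriv (Eq.symm ?_)
  rw [e1, e2, e3]
  -- now pure algebra with N, D, A, B
  have h2re : ∀ z : ℂ, (((2:ℝ) * z.re : ℝ) : ℂ) = z + starRingEnd ℂ z := by
    intro z
    push_cast
    rw [Complex.add_conj]
    push_cast
    ring
  rw [h2re]
  simp only [map_sub, map_mul, map_div₀, hNconj, hDconj]
  field_simp [hDne]
  ring
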